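/- The sequence a(n) counting closed walks of length n based at state ⟨3⟩ in the multiplex state diagram with b = 3 balls and capacity m = 3 satisfies a(k+3) = 10·a(k+2) − 27·a(k+1) + 20·a(k) for all k ≥ 1, with initial values a(1) = 1, a(2) = 4, a(3) = 20. -/

import Mathlib

namespace MultiplexAux

open Finsupp Classical

noncomputable section

abbrev M : Type := ℕ →₀ ℕ

def G : M := Finsupp.single 0 3

def IsState (v : M) : Prop := (∀ i, v i ≤ 3) ∧ v.sum (fun _ x => x) = 3

def Step (α β : M) : Prop := ∀ i, α (i + 1) ≤ β i

def Wset (n : ℕ) (s : M) : Set (Fin (n + 1) → M) :=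
  {f | f 0 = s ∧ f (Fin.last n) = G ∧ (∀ k, IsState (f k)) ∧
    (∀ k : Fin n, Step (f k.castSucc) (f k.succ))}

def W (n : ℕ) (s : M) : ℕ := (Wset n s).ncard

lemma step_of_mem {n : ℕ} {s : M} {f : Fin (n + 1) → M} (hf : f ∈ Wset n s)
    {k : ℕ} (hk : k < n) (i : ℕ) :
    f ⟨k, by omega⟩ (i + 1) ≤ f ⟨k + 1, by omega⟩ i := by
  have := hf.2.2.2 ⟨k, hk⟩ i
  simpa [Fin.castSucc, Fin.succ, Fin.castAdd, Fin.castLE] using this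

lemma supp_bound {n : ℕ} {s : M} {f : Fin (n + 1) → M} (hf : f ∈ Wset n s) :
    ∀ d k (hk : k + d = n) i, n - k < i → f ⟨k, by omega⟩ i = 0 := by
  intro d
  induction d with
  | zero =>
      intro k hk i hi
      have hlast : f ⟨k, by omega⟩ = G := by
        have h2 := hf.2.1
        have he : (Fin.last n) = (⟨k, by omega⟩ : Fin (n+1)) := by
          apply Fin.ext; simp [Fin.last]; omega
        rwa [he] at h2
      rw [hlast]
      have hne : ¬ ((0:ℕ) = i) := by omega
      simp [G, Finsupp.single_apply, hne]
  | succ d ih =>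
      intro k hk i hi
      have hi1 : 1 ≤ i := by omega
      have h1 : f ⟨k, by omega⟩ ((i - 1) + 1) ≤ f ⟨k + 1, by omega⟩ (i - 1) :=
        step_of_mem hf (by omega) (i - 1)
      have h2 : f ⟨k + 1, by omega⟩ (i - 1) = 0 := ih (k + 1) (by omega) (i - 1) (by omega)
      have : f ⟨k, by omega⟩ i ≤ 0 := by
        rw [(by omega : i - 1 + 1 = i)] at h1
        omega
      omega

lemma supp_bound' {n : ℕ} {s : M} {f : Fin (n + 1) → M} (hf : f ∈ Wset n s)
    (k : Fin (n + 1)) {i : ℕ} (hi : n - (k : ℕ) < i) : f k i = 0 := by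
  have := supp_bound hf (n - k) k (by omega) i hi
  simpa using this

lemma wset_finite (n : ℕ) (s : M) : (Wset n s).Finite := by
  have : Finite ↥(Wset n s) := by
    refine Finite.of_injective
      (fun f => (fun (k : Fin (n + 1)) (i : Fin (n + 1)) =>
        (⟨(f : Fin (n+1) → M) k i, by
          have := (f.2.2.2.1 k).1 i; omega⟩ : Fin 4))) ?_
    intro f g h
    apply Subtype.ext
    funext k
    ext i
    by_cases hi : i ≤ n
    · have := congrFun (congrFun h k) ⟨i, by omega⟩
      exact congrArg Fin.val this
    · rw [supp_bound' f.2 k (by omega), supp_bound' g.2 k (by omega)]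
  exact Set.finite_coe_iff.mp this

def B (N : ℕ) : M := (Finset.range N).sum (fun i => Finsupp.single i 3)

lemma B_apply (N i : ℕ) : B N i = if i < N then 3 else 0 := by
  classical
  rw [B, Finsupp.finset_sum_apply]
  simp [Finsupp.single_apply]

def StateF (N : ℕ) : Finset M :=
  (Finset.Iic (B N)).filter (fun t => t.sum (fun _ x => x) = 3)

lemma mem_StateF {N : ℕ} {t : M} :
    t ∈ StateF N ↔ IsState t ∧ ∀ i, N ≤ i → t i = 0 := by
  classical
  rw [StateF, Finset.mem_filter, Finset.mem_Iic, Finsupp.le_def]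
  constructor
  · rintro ⟨hle, hsum⟩
    refine ⟨⟨fun i => ?_, hsum⟩, fun i hi => ?_⟩
    · have := hle i; rw [B_apply] at this; split_ifs at this <;> omega
    · have := hle i; rw [B_apply] at this; split_ifs at this <;> omega
  · rintro ⟨⟨hb, hsum⟩, hz⟩
    refine ⟨fun i => ?_, hsum⟩
    rw [B_apply]; split_ifs with h
    · exact hb i
    · have := hz i (by omega); omega

lemma G_isState : IsState G := by
  constructor
  · intro i; rw [G, Finsupp.single_apply]; split_ifs <;> first | contradiction | omega
  · rw [G, Finsupp.sum_single_index]; rfl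

lemma tail_mem {n : ℕ} {s t : M} {f : Fin (n + 2) → M} (hf : f ∈ Wset (n + 1) s)
    (ht : f 1 = t) : (f ∘ Fin.succ) ∈ Wset n t := by
  obtain ⟨h0, hlast, hst, hstep⟩ := hf
  refine ⟨ht, ?_, fun k => hst k.succ, fun k => ?_⟩
  · show f (Fin.last n).succ = G
    have : (Fin.last n).succ = Fin.last (n + 1) := by
      apply Fin.ext; simp [Fin.last]
    rw [this]; exact hlast
  · show Step (f k.castSucc.succ) (f k.succ.succ)
    have h1 : k.castSucc.succ = (k.succ).castSucc := Fin.succ_castSucc k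
    rw [h1]
    exact hstep k.succ

lemma cons_mem {n : ℕ} {s t : M} (hs : IsState s) (hstep : Step s t)
    {g : Fin (n + 1) → M} (hg : g ∈ Wset n t) :
    (Fin.cases s g : Fin (n + 2) → M) ∈ Wset (n + 1) s := by
  obtain ⟨h0, hlast, hst, hsteps⟩ := hg
  refine ⟨rfl, ?_, fun k => ?_, fun k => ?_⟩
  · have : (Fin.last (n + 1)) = (Fin.last n).succ := by
      apply Fin.ext; simp [Fin.last]
    rw [this]
    exact hlast
  · induction k using Fin.cases with
    | zero => simpa using hs
    | succ i => simpa using hst i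
  · induction k using Fin.cases with
    | zero =>
        have e1 : (0 : Fin (n+1)).castSucc = (0 : Fin (n+2)) := rfl
        have e2 : (0 : Fin (n+1)).succ = (1 : Fin (n+2)) := rfl
        rw [e1, e2]
        show Step s (Fin.cases s g (1 : Fin (n+2)))
        have : (1 : Fin (n+2)) = (0 : Fin (n+1)).succ := rfl
        rw [this, Fin.cases_succ]
        rw [h0]; exact hstep
    | succ i =>
        have e1 : (i.succ).castSucc = (i.castSucc).succ := (Fin.succ_castSucc i).symm
        rw [e1]
        simpa using hsteps i

lemma W_succ (n : ℕ) (s : M) (hs : IsState s) :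
    W (n + 1) s = ∑ t ∈ (StateF (n + 1)).filter (fun t => Step s t), W n t := by
  classical
  have hfin := wset_finite (n + 1) s
  rw [W, Set.ncard_eq_toFinset_card _ hfin]
  rw [Finset.card_eq_sum_card_fiberwise (f := fun f => f 1)
      (t := (StateF (n + 1)).filter (fun t => Step s t))
      (fun f hf => by
        rw [Finset.mem_coe, Set.Finite.mem_toFinset] at hf
        rw [Finset.mem_coe, Finset.mem_filter, mem_StateF]
        refine ⟨⟨hf.2.2.1 1, fun i hi => supp_bound' hf 1 (by simpa using by omega)⟩, ?_⟩
        have h0 := hf.2.2.2 0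
        have e0 : (0 : Fin (n+1)).castSucc = (0 : Fin (n+2)) := rfl
        have e1 : (0 : Fin (n+1)).succ = (1 : Fin (n+2)) := rfl
        rw [e0, e1, hf.1] at h0
        exact h0)]
  apply Finset.sum_congr rfl
  intro t ht
  rw [Finset.mem_filter] at ht
  have hstept : Step s t := ht.2
  have hA : (↑(hfin.toFinset.filter (fun f => f 1 = t)) : Set (Fin (n+2) → M))
      = {f | f ∈ Wset (n+1) s ∧ f 1 = t} := by
    ext f; simp [Set.Finite.mem_toFinset]
  have himg : (fun f => f ∘ Fin.succ) '' {f | f ∈ Wset (n+1) s ∧ f 1 = t} = Wset n t := by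
    apply Set.Subset.antisymm
    · rintro g ⟨f, ⟨hf, hf1⟩, rfl⟩
      exact tail_mem hf hf1
    · intro g hg
      refine ⟨Fin.cases s g, ⟨cons_mem hs hstept hg, ?_⟩, ?_⟩
      · show (fun i => (Fin.cases s g : Fin (n+2) → M) i) (0 : Fin (n+1)).succ = t
        exact hg.1
      · funext k
        simp
  have hinj : Set.InjOn (fun f => f ∘ Fin.succ) {f | f ∈ Wset (n+1) s ∧ f 1 = t} := by
    rintro f ⟨hf, -⟩ f' ⟨hf', -⟩ he
    funext k
    induction k using Fin.cases with
    | zero => rw [hf.1, hf'.1]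
    | succ i => exact congrFun he i
  calc (hfin.toFinset.filter (fun f => f 1 = t)).card
      = ({f | f ∈ Wset (n+1) s ∧ f 1 = t} : Set (Fin (n+2) → M)).ncard := by
        rw [← hA, Set.ncard_coe_finset]
    _ = W n t := by rw [W, ← himg, Set.ncard_image_of_injOn hinj]


-- helper lemmas about sums of singles
lemma sum3 (u v a b c : ℕ) :
    (Finsupp.single 0 a + Finsupp.single u b + Finsupp.single v c : M).sum (fun _ x => x)
      = a + b + c := by
  rw [Finsupp.sum_add_index' (fun _ => rfl) (fun _ _ _ => rfl),
      Finsupp.sum_add_index' (fun _ => rfl) (fun _ _ _ => rfl),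
      Finsupp.sum_single_index rfl, Finsupp.sum_single_index rfl,
      Finsupp.sum_single_index rfl]

lemma sum4 (u v w a b c d : ℕ) :
    (Finsupp.single 0 a + Finsupp.single u b + Finsupp.single v c + Finsupp.single w d : M).sum
      (fun _ x => x) = a + b + c + d := by
  rw [Finsupp.sum_add_index' (fun _ => rfl) (fun _ _ _ => rfl), sum3,
      Finsupp.sum_single_index rfl]

lemma supp_single_sub (i a : ℕ) : (Finsupp.single i a : M).support ⊆ {i} :=
  Finsupp.support_single_subset

lemma card_supp3 {u v : ℕ} (hu : u ≠ 0) (hv : v ≠ 0) (huv : u ≠ v) (a b c : ℕ) :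
    (Finsupp.single 0 a + Finsupp.single u b + Finsupp.single v c : M).support.card
      = (if a = 0 then 0 else 1) + (if b = 0 then 0 else 1) + (if c = 0 then 0 else 1) := by
  classical
  have d1 : Disjoint (Finsupp.single 0 a : M).support (Finsupp.single u b : M).support := by
    rw [Finset.disjoint_left]
    intro i h1 h2
    have e1 := supp_single_sub 0 a h1
    have e2 := supp_single_sub u b h2
    simp only [Finset.mem_singleton] at e1 e2
    omega
  have d2 : Disjoint ((Finsupp.single 0 a + Finsupp.single u b : M)).support
      (Finsupp.single v c : M).support := by
    rw [Finset.disjoint_left]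
    intro i h1 h2
    have e2 := supp_single_sub v c h2
    have e1 := Finsupp.support_add h1
    simp only [Finset.mem_union, Finset.mem_singleton] at e1 e2
    rcases e1 with h | h
    · have := supp_single_sub 0 a h; simp only [Finset.mem_singleton] at this; omega
    · have := supp_single_sub u b h; simp only [Finset.mem_singleton] at this; omega
  rw [Finsupp.support_add_eq d2, Finsupp.support_add_eq d1]
  have huv2 : ({u} ∪ {v} : Finset ℕ).card = 2 := by
    rw [Finset.card_union_of_disjoint (by simp [Ne.symm huv, huv])]; simp
  by_cases ha : a = 0 <;> by_cases hb : b = 0 <;> by_cases hc : c = 0 <;>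
    simp [ha, hb, hc, Finsupp.support_single_ne_zero, Finset.card_insert_of_notMem,
      huv2, hu, hv, huv, Ne.symm hu, Ne.symm hv]

lemma apply3 (u v a b c i : ℕ) :
    (Finsupp.single 0 a + Finsupp.single u b + Finsupp.single v c : M) i
      = (if 0 = i then a else 0) + (if u = i then b else 0) + (if v = i then c else 0) := by
  simp [Finsupp.single_apply]

lemma eq_single_add {s : M} {A : Finset ℕ} (h : ∀ i, i ∉ A → s i = 0) :
    s = ∑ i ∈ A, Finsupp.single i (s i) := by
  classical
  ext j
  rw [Finsupp.finset_sum_apply]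
  by_cases hj : j ∈ A
  · rw [Finset.sum_eq_single j (fun b _ hb => by simp [Finsupp.single_apply, hb])
      (fun hj' => absurd hj hj')]
    simp
  · rw [Finset.sum_eq_zero (fun b hb => by
      have : b ≠ j := fun e => hj (e ▸ hb)
      simp [Finsupp.single_apply, this])]
    exact h j hj

lemma sum_over_support (t : M) : t.sum (fun _ x => x) = ∑ i ∈ t.support, t i := rfl

lemma state_shape (t : M) (ht : IsState t) :
    (∃ x, t = Finsupp.single x 3) ∨
    (∃ x y, x ≠ y ∧ t = Finsupp.single x 2 + Finsupp.single y 1) ∨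
    (∃ x y z, x ≠ y ∧ x ≠ z ∧ y ≠ z ∧
      t = Finsupp.single x 1 + Finsupp.single y 1 + Finsupp.single z 1) := by
  classical
  have hsum : ∑ i ∈ t.support, t i = 3 := by rw [← sum_over_support]; exact ht.2
  have hpos : ∀ i ∈ t.support, 1 ≤ t i := fun i hi => by
    have := Finsupp.mem_support_iff.mp hi; omega
  have hcard : t.support.card ≤ 3 := by
    have := Finset.card_nsmul_le_sum t.support t 1 hpos
    simpa [hsum] using this
  have hrep : t = ∑ i ∈ t.support, Finsupp.single i (t i) :=
    eq_single_add (fun i hi => Finsupp.notMem_support_iff.mp hi)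
  interval_cases hc : t.support.card
  · exfalso
    rw [Finset.card_eq_zero] at hc
    rw [hc] at hsum
    simp at hsum
  · left
    obtain ⟨x, hx⟩ := Finset.card_eq_one.mp hc
    refine ⟨x, ?_⟩
    rw [hx] at hsum
    simp at hsum
    rw [hx, Finset.sum_singleton, hsum] at hrep
    exact hrep
  · right; left
    obtain ⟨x, y, hxy, hx⟩ := Finset.card_eq_two.mp hc
    have hsum2 : t x + t y = 3 := by
      rw [hx, Finset.sum_insert (by simp [hxy])] at hsum
      simpa using hsum
    have h1 : 1 ≤ t x := hpos x (by simp [hx])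
    have h2 : 1 ≤ t y := hpos y (by simp [hx])
    have hrep2 : t = Finsupp.single x (t x) + Finsupp.single y (t y) := by
      rw [hx, Finset.sum_insert (by simp [hxy]), Finset.sum_singleton] at hrep
      exact hrep
    rcases (by omega : t x = 2 ∧ t y = 1 ∨ t x = 1 ∧ t y = 2) with ⟨e1, e2⟩ | ⟨e1, e2⟩
    · exact ⟨x, y, hxy, by rw [hrep2, e1, e2]⟩
    · exact ⟨y, x, Ne.symm hxy, by rw [hrep2, e1, e2, add_comm]⟩
  · right; right
    obtain ⟨x, y, z, hxy, hxz, hyz, hx⟩ := Finset.card_eq_three.mp hc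
    have hsum3 : t x + t y + t z = 3 := by
      rw [hx, Finset.sum_insert (by simp [hxy, hxz]),
        Finset.sum_insert (by simp [hyz])] at hsum
      simpa [add_assoc] using hsum
    have h1 : 1 ≤ t x := hpos x (by simp [hx])
    have h2 : 1 ≤ t y := hpos y (by simp [hx])
    have h3 : 1 ≤ t z := hpos z (by simp [hx])
    have e1 : t x = 1 := by omega
    have e2 : t y = 1 := by omega
    have e3 : t z = 1 := by omega
    refine ⟨x, y, z, hxy, hxz, hyz, ?_⟩
    rw [hx, Finset.sum_insert (by simp [hxy, hxz]),
      Finset.sum_insert (by simp [hyz]), Finset.sum_singleton, e1, e2, e3] at hrep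
    rw [hrep, add_assoc]


lemma sum2 (u a b : ℕ) :
    (Finsupp.single 0 a + Finsupp.single u b : M).sum (fun _ x => x) = a + b := by
  rw [Finsupp.sum_add_index' (fun _ => rfl) (fun _ _ _ => rfl),
      Finsupp.sum_single_index rfl, Finsupp.sum_single_index rfl]

lemma card_supp2 {u : ℕ} (hu : u ≠ 0) (a b : ℕ) :
    (Finsupp.single 0 a + Finsupp.single u b : M).support.card
      = (if a = 0 then 0 else 1) + (if b = 0 then 0 else 1) := by
  classical
  have d1 : Disjoint (Finsupp.single 0 a : M).support (Finsupp.single u b : M).support := by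
    rw [Finset.disjoint_left]
    intro i h1 h2
    have e1 := supp_single_sub 0 a h1
    have e2 := supp_single_sub u b h2
    simp only [Finset.mem_singleton] at e1 e2
    omega
  rw [Finsupp.support_add_eq d1, Finset.card_union_of_disjoint d1]
  by_cases ha : a = 0 <;> by_cases hb : b = 0 <;>
    simp [ha, hb, Finsupp.support_single_ne_zero]

lemma card_supp4 {u v w : ℕ} (hu : u ≠ 0) (hv : v ≠ 0) (hw : w ≠ 0)
    (huv : u ≠ v) (huw : u ≠ w) (hvw : v ≠ w) (a b c d : ℕ) :
    (Finsupp.single 0 a + Finsupp.single u b + Finsupp.single v c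
      + Finsupp.single w d : M).support.card
      = (if a = 0 then 0 else 1) + (if b = 0 then 0 else 1) + (if c = 0 then 0 else 1)
        + (if d = 0 then 0 else 1) := by
  classical
  have hsub : (Finsupp.single 0 a + Finsupp.single u b + Finsupp.single v c : M).support
      ⊆ {0, u, v} := by
    intro i hi
    rcases Finset.mem_union.mp (Finsupp.support_add hi) with h | h
    · rcases Finset.mem_union.mp (Finsupp.support_add h) with h' | h'
      · have := supp_single_sub 0 a h'; simp only [Finset.mem_singleton] at this
        simp [this]
      · have := supp_single_sub u b h'; simp only [Finset.mem_singleton] at this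
        simp [this]
    · have := supp_single_sub v c h; simp only [Finset.mem_singleton] at this
      simp [this]
  have dj : Disjoint
      (Finsupp.single 0 a + Finsupp.single u b + Finsupp.single v c : M).support
      (Finsupp.single w d : M).support := by
    rw [Finset.disjoint_left]
    intro i h1 h2
    have e1 := hsub h1
    have e2 := supp_single_sub w d h2
    simp only [Finset.mem_singleton, Finset.mem_insert] at e1 e2
    omega
  rw [Finsupp.support_add_eq dj, Finset.card_union_of_disjoint dj, card_supp3 hu hv huv]
  by_cases hd : d = 0 <;> simp [hd, Finsupp.support_single_ne_zero]

lemma mem_pred1 {j x : ℕ} (hx : x < j + 1) (s : M) :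
    (s ∈ StateF (j + 2) ∧ Step s (Finsupp.single x 3)) ↔
    ∃ b, b ≤ 3 ∧ s = Finsupp.single 0 (3 - b) + Finsupp.single (x + 1) b := by
  constructor
  · rintro ⟨hsf, hstep⟩
    rw [mem_StateF] at hsf
    obtain ⟨⟨hle, hsum⟩, -⟩ := hsf
    have hz : ∀ i, i ∉ ({0, x + 1} : Finset ℕ) → s i = 0 := by
      intro i hi
      simp only [Finset.mem_insert, Finset.mem_singleton] at hi
      push_neg at hi
      obtain ⟨hi0, hix⟩ := hi
      obtain ⟨i', rfl⟩ : ∃ i', i = i' + 1 := ⟨i - 1, by omega⟩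
      have := hstep i'
      have ht : (Finsupp.single x 3 : M) i' = 0 := by
        rw [Finsupp.single_apply]
        have : ¬ x = i' := by omega
        simp [this]
      omega
    have rep := eq_single_add hz
    rw [Finset.sum_insert (by simp), Finset.sum_singleton] at rep
    have hb : s (x + 1) ≤ 3 := hle _
    have hsum2 : s 0 + s (x + 1) = 3 := by
      rw [← sum2 (x + 1) (s 0) (s (x + 1)), ← rep]
      exact hsum
    refine ⟨s (x + 1), hb, ?_⟩
    have h0 : s 0 = 3 - s (x + 1) := by omega
    rw [← h0]
    exact rep
  · rintro ⟨b, hb, rfl⟩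
    constructor
    · rw [mem_StateF]
      refine ⟨⟨fun i => ?_, ?_⟩, fun i hi => ?_⟩
      · simp only [Finsupp.add_apply, Finsupp.single_apply]
        split_ifs <;> first | contradiction | omega
      · rw [sum2]; omega
      · simp only [Finsupp.add_apply, Finsupp.single_apply]
        split_ifs <;> first | contradiction | omega
    · intro i
      simp only [Finsupp.add_apply, Finsupp.single_apply]
      split_ifs <;> first | contradiction | omega

lemma mem_pred2 {j x y : ℕ} (hx : x < j + 1) (hy : y < j + 1) (hxy : x ≠ y) (s : M) :
    (s ∈ StateF (j + 2) ∧ Step s (Finsupp.single x 2 + Finsupp.single y 1)) ↔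
    ∃ b c, b ≤ 2 ∧ c ≤ 1 ∧
      s = Finsupp.single 0 (3 - b - c) + Finsupp.single (x + 1) b
        + Finsupp.single (y + 1) c := by
  constructor
  · rintro ⟨hsf, hstep⟩
    rw [mem_StateF] at hsf
    obtain ⟨⟨hle, hsum⟩, -⟩ := hsf
    have hz : ∀ i, i ∉ ({0, x + 1, y + 1} : Finset ℕ) → s i = 0 := by
      intro i hi
      simp only [Finset.mem_insert, Finset.mem_singleton] at hi
      push_neg at hi
      obtain ⟨hi0, hix, hiy⟩ := hi
      obtain ⟨i', rfl⟩ : ∃ i', i = i' + 1 := ⟨i - 1, by omega⟩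
      have := hstep i'
      have ht : (Finsupp.single x 2 + Finsupp.single y 1 : M) i' = 0 := by
        simp only [Finsupp.add_apply, Finsupp.single_apply]
        have h1 : ¬ x = i' := by omega
        have h2 : ¬ y = i' := by omega
        simp [h1, h2]
      omega
    have rep := eq_single_add hz
    rw [Finset.sum_insert (by simp), Finset.sum_insert (by simp [Nat.succ_injective.ne hxy, hxy]),
      Finset.sum_singleton, ← add_assoc] at rep
    have hb : s (x + 1) ≤ 2 := by
      have := hstep x
      have ht : (Finsupp.single x 2 + Finsupp.single y 1 : M) x = 2 := by
        simp only [Finsupp.add_apply, Finsupp.single_apply]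
        simp [hxy, Ne.symm hxy]
      omega
    have hc : s (y + 1) ≤ 1 := by
      have := hstep y
      have ht : (Finsupp.single x 2 + Finsupp.single y 1 : M) y = 1 := by
        simp only [Finsupp.add_apply, Finsupp.single_apply]
        simp [hxy, Ne.symm hxy]
      omega
    have hsum2 : s 0 + s (x + 1) + s (y + 1) = 3 := by
      rw [← sum3 (x + 1) (y + 1) (s 0) (s (x + 1)) (s (y + 1)), ← rep]
      exact hsum
    refine ⟨s (x + 1), s (y + 1), hb, hc, ?_⟩
    have h0 : s 0 = 3 - s (x + 1) - s (y + 1) := by omega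
    rw [← h0]
    exact rep
  · rintro ⟨b, c, hb, hc, rfl⟩
    constructor
    · rw [mem_StateF]
      refine ⟨⟨fun i => ?_, ?_⟩, fun i hi => ?_⟩
      · simp only [Finsupp.add_apply, Finsupp.single_apply]
        split_ifs <;> first | contradiction | omega
      · rw [sum3]; omega
      · simp only [Finsupp.add_apply, Finsupp.single_apply]
        split_ifs <;> first | contradiction | omega
    · intro i
      simp only [Finsupp.add_apply, Finsupp.single_apply]
      split_ifs <;> first | contradiction | omega

lemma mem_pred3 {j x y z : ℕ} (hx : x < j + 1) (hy : y < j + 1) (hz' : z < j + 1)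
    (hxy : x ≠ y) (hxz : x ≠ z) (hyz : y ≠ z) (s : M) :
    (s ∈ StateF (j + 2) ∧
      Step s (Finsupp.single x 1 + Finsupp.single y 1 + Finsupp.single z 1)) ↔
    ∃ b c d, b ≤ 1 ∧ c ≤ 1 ∧ d ≤ 1 ∧
      s = Finsupp.single 0 (3 - b - c - d) + Finsupp.single (x + 1) b
        + Finsupp.single (y + 1) c + Finsupp.single (z + 1) d := by
  constructor
  · rintro ⟨hsf, hstep⟩
    rw [mem_StateF] at hsf
    obtain ⟨⟨hle, hsum⟩, -⟩ := hsf
    have hz : ∀ i, i ∉ ({0, x + 1, y + 1, z + 1} : Finset ℕ) → s i = 0 := by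
      intro i hi
      simp only [Finset.mem_insert, Finset.mem_singleton] at hi
      push_neg at hi
      obtain ⟨hi0, hix, hiy, hiz⟩ := hi
      obtain ⟨i', rfl⟩ : ∃ i', i = i' + 1 := ⟨i - 1, by omega⟩
      have := hstep i'
      have ht : (Finsupp.single x 1 + Finsupp.single y 1 + Finsupp.single z 1 : M) i' = 0 := by
        simp only [Finsupp.add_apply, Finsupp.single_apply]
        have h1 : ¬ x = i' := by omega
        have h2 : ¬ y = i' := by omega
        have h3 : ¬ z = i' := by omega
        simp [h1, h2, h3]
      omega
    have rep := eq_single_add hz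
    rw [Finset.sum_insert (by simp),
      Finset.sum_insert (by simp [Nat.succ_injective.ne hxy, Nat.succ_injective.ne hxz, hxy, hxz]),
      Finset.sum_insert (by simp [Nat.succ_injective.ne hyz, hyz]),
      Finset.sum_singleton, ← add_assoc, ← add_assoc] at rep
    have hval : ∀ u, u = x ∨ u = y ∨ u = z →
        (Finsupp.single x 1 + Finsupp.single y 1 + Finsupp.single z 1 : M) u = 1 := by
      intro u hu
      simp only [Finsupp.add_apply, Finsupp.single_apply]
      rcases hu with rfl | rfl | rfl
      · simp [hxy, hxz, Ne.symm hxy, Ne.symm hxz]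
      · simp [hxy, hyz, Ne.symm hxy, Ne.symm hyz]
      · simp [hxz, hyz, Ne.symm hxz, Ne.symm hyz]
    have hb : s (x + 1) ≤ 1 := by have := hstep x; rw [hval x (by tauto)] at this; omega
    have hc : s (y + 1) ≤ 1 := by have := hstep y; rw [hval y (by tauto)] at this; omega
    have hd : s (z + 1) ≤ 1 := by have := hstep z; rw [hval z (by tauto)] at this; omega
    have hsum2 : s 0 + s (x + 1) + s (y + 1) + s (z + 1) = 3 := by
      rw [← sum4 (x + 1) (y + 1) (z + 1) (s 0) (s (x + 1)) (s (y + 1)) (s (z + 1)), ← rep]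
      exact hsum
    refine ⟨s (x + 1), s (y + 1), s (z + 1), hb, hc, hd, ?_⟩
    have h0 : s 0 = 3 - s (x + 1) - s (y + 1) - s (z + 1) := by omega
    rw [← h0]
    exact rep
  · rintro ⟨b, c, d, hb, hc, hd, rfl⟩
    constructor
    · rw [mem_StateF]
      refine ⟨⟨fun i => ?_, ?_⟩, fun i hi => ?_⟩
      · simp only [Finsupp.add_apply, Finsupp.single_apply]
        split_ifs <;> first | contradiction | omega
      · rw [sum4]; omega
      · simp only [Finsupp.add_apply, Finsupp.single_apply]
        split_ifs <;> first | contradiction | omega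
    · intro i
      simp only [Finsupp.add_apply, Finsupp.single_apply]
      split_ifs <;> first | contradiction | omega


lemma cnt1 {j x : ℕ} (hx : x < j + 1) (P : ℕ) :
    ((StateF (j + 2)).filter
      (fun s => s.support.card = P ∧ Step s (Finsupp.single x 3))).card
    = if P = 1 then 2 else if P = 2 then 2 else 0 := by
  classical
  set m : ℕ → M := fun b => Finsupp.single 0 (3 - b) + Finsupp.single (x + 1) b with hm
  have hinj : Function.Injective m := by
    intro b b' h
    have := congrArg (fun f : M => f (x + 1)) h
    simp only [hm, Finsupp.add_apply, Finsupp.single_apply] at this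
    split_ifs at this <;> first | contradiction | omega
  have hset : (StateF (j + 2)).filter
      (fun s => s.support.card = P ∧ Step s (Finsupp.single x 3))
      = Finset.image m ((Finset.range 4).filter
          (fun b => (if 3 - b = 0 then 0 else 1) + (if b = 0 then 0 else 1) = P)) := by
    ext s
    simp only [Finset.mem_filter, Finset.mem_image, Finset.mem_range]
    constructor
    · rintro ⟨hsf, hcP, hstep⟩
      obtain ⟨b, hb, rfl⟩ := (mem_pred1 hx s).mp ⟨hsf, hstep⟩
      refine ⟨b, ⟨by omega, ?_⟩, rfl⟩
      rw [card_supp2 (by omega)] at hcP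
      exact hcP
    · rintro ⟨b, ⟨hb4, hbP⟩, rfl⟩
      have hmem := (mem_pred1 hx (m b)).mpr ⟨b, by omega, rfl⟩
      refine ⟨hmem.1, ?_, hmem.2⟩
      rw [hm]
      rw [card_supp2 (by omega)]
      exact hbP
  rw [hset, Finset.card_image_of_injective _ hinj, Finset.card_filter,
    Finset.sum_range_succ, Finset.sum_range_succ, Finset.sum_range_succ,
    Finset.sum_range_one]
  norm_num
  split_ifs <;> first | contradiction | omega

lemma cnt2 {j x y : ℕ} (hx : x < j + 1) (hy : y < j + 1) (hxy : x ≠ y) (P : ℕ) :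
    ((StateF (j + 2)).filter
      (fun s => s.support.card = P ∧ Step s (Finsupp.single x 2 + Finsupp.single y 1))).card
    = if P = 1 then 1 else if P = 2 then 4 else if P = 3 then 1 else 0 := by
  classical
  set m : ℕ × ℕ → M := fun p => Finsupp.single 0 (3 - p.1 - p.2)
      + Finsupp.single (x + 1) p.1 + Finsupp.single (y + 1) p.2 with hm
  have hxy1 : (x : ℕ) + 1 ≠ y + 1 := by omega
  have hinj : Function.Injective m := by
    intro p p' h
    have h1 := congrArg (fun f : M => f (x + 1)) h
    have h2 := congrArg (fun f : M => f (y + 1)) h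
    simp only [hm, Finsupp.add_apply, Finsupp.single_apply] at h1 h2
    have : p.1 = p'.1 ∧ p.2 = p'.2 := by
      constructor <;> [skip; skip] <;> split_ifs at h1 h2 <;> first | contradiction | omega
    exact Prod.ext this.1 this.2
  have hset : (StateF (j + 2)).filter
      (fun s => s.support.card = P ∧ Step s (Finsupp.single x 2 + Finsupp.single y 1))
      = Finset.image m ((Finset.range 3 ×ˢ Finset.range 2).filter
          (fun p => (if 3 - p.1 - p.2 = 0 then 0 else 1) + (if p.1 = 0 then 0 else 1)
            + (if p.2 = 0 then 0 else 1) = P)) := by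
    ext s
    simp only [Finset.mem_filter, Finset.mem_image, Finset.mem_product, Finset.mem_range]
    constructor
    · rintro ⟨hsf, hcP, hstep⟩
      obtain ⟨b, c, hb, hc, rfl⟩ := (mem_pred2 hx hy hxy s).mp ⟨hsf, hstep⟩
      refine ⟨(b, c), ⟨⟨by omega, by omega⟩, ?_⟩, rfl⟩
      rw [card_supp3 (by omega) (by omega) hxy1] at hcP
      exact hcP
    · rintro ⟨p, ⟨⟨hb3, hc2⟩, hbP⟩, rfl⟩
      have hmem := (mem_pred2 hx hy hxy (m p)).mpr ⟨p.1, p.2, by omega, by omega, rfl⟩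
      refine ⟨hmem.1, ?_, hmem.2⟩
      rw [hm]
      rw [card_supp3 (by omega) (by omega) hxy1]
      exact hbP
  rw [hset, Finset.card_image_of_injective _ hinj, Finset.card_filter,
    Finset.sum_product, Finset.sum_range_succ, Finset.sum_range_succ,
    Finset.sum_range_one]
  simp only [Finset.sum_range_succ, Finset.sum_range_one]
  norm_num
  split_ifs <;> first | contradiction | omega

lemma cnt3 {j x y z : ℕ} (hx : x < j + 1) (hy : y < j + 1) (hz : z < j + 1)
    (hxy : x ≠ y) (hxz : x ≠ z) (hyz : y ≠ z) (P : ℕ) :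
    ((StateF (j + 2)).filter
      (fun s => s.support.card = P ∧
        Step s (Finsupp.single x 1 + Finsupp.single y 1 + Finsupp.single z 1))).card
    = if P = 1 then 1 else if P = 2 then 3 else if P = 3 then 4 else 0 := by
  classical
  set m : (ℕ × ℕ) × ℕ → M := fun p => Finsupp.single 0 (3 - p.1.1 - p.1.2 - p.2)
      + Finsupp.single (x + 1) p.1.1 + Finsupp.single (y + 1) p.1.2
      + Finsupp.single (z + 1) p.2 with hm
  have hxy1 : (x : ℕ) + 1 ≠ y + 1 := by omega
  have hxz1 : (x : ℕ) + 1 ≠ z + 1 := by omega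
  have hyz1 : (y : ℕ) + 1 ≠ z + 1 := by omega
  have hinj : Function.Injective m := by
    intro p p' h
    have h1 := congrArg (fun f : M => f (x + 1)) h
    have h2 := congrArg (fun f : M => f (y + 1)) h
    have h3 := congrArg (fun f : M => f (z + 1)) h
    simp only [hm, Finsupp.add_apply, Finsupp.single_apply] at h1 h2 h3
    have e1 : p.1.1 = p'.1.1 := by split_ifs at h1 <;> first | contradiction | omega
    have e2 : p.1.2 = p'.1.2 := by split_ifs at h2 <;> first | contradiction | omega
    have e3 : p.2 = p'.2 := by split_ifs at h3 <;> first | contradiction | omega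
    exact Prod.ext (Prod.ext e1 e2) e3
  have hset : (StateF (j + 2)).filter
      (fun s => s.support.card = P ∧
        Step s (Finsupp.single x 1 + Finsupp.single y 1 + Finsupp.single z 1))
      = Finset.image m (((Finset.range 2 ×ˢ Finset.range 2) ×ˢ Finset.range 2).filter
          (fun p => (if 3 - p.1.1 - p.1.2 - p.2 = 0 then 0 else 1)
            + (if p.1.1 = 0 then 0 else 1) + (if p.1.2 = 0 then 0 else 1)
            + (if p.2 = 0 then 0 else 1) = P)) := by
    ext s
    simp only [Finset.mem_filter, Finset.mem_image, Finset.mem_product, Finset.mem_range]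
    constructor
    · rintro ⟨hsf, hcP, hstep⟩
      obtain ⟨b, c, d, hb, hc, hd, rfl⟩ := (mem_pred3 hx hy hz hxy hxz hyz s).mp ⟨hsf, hstep⟩
      refine ⟨((b, c), d), ⟨⟨⟨show b < 2 by omega, show c < 2 by omega⟩,
        show d < 2 by omega⟩, ?_⟩, rfl⟩
      rw [card_supp4 (by omega) (by omega) (by omega) hxy1 hxz1 hyz1] at hcP
      exact hcP
    · rintro ⟨p, ⟨⟨⟨hb2, hc2⟩, hd2⟩, hbP⟩, rfl⟩
      have hmem := (mem_pred3 hx hy hz hxy hxz hyz (m p)).mpr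
        ⟨p.1.1, p.1.2, p.2, by omega, by omega, by omega, rfl⟩
      refine ⟨hmem.1, ?_, hmem.2⟩
      rw [hm]
      rw [card_supp4 (by omega) (by omega) (by omega) hxy1 hxz1 hyz1]
      exact hbP
  rw [hset, Finset.card_image_of_injective _ hinj, Finset.card_filter,
    Finset.sum_product, Finset.sum_product]
  simp only [Finset.sum_range_succ, Finset.sum_range_one]
  norm_num
  split_ifs <;> first | contradiction | omega


def NP (P q : ℕ) : ℕ :=
  if q = 1 then (if P = 1 then 2 else if P = 2 then 2 else 0)
  else if q = 2 then (if P = 1 then 1 else if P = 2 then 4 else if P = 3 then 1 else 0)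
  else if q = 3 then (if P = 1 then 1 else if P = 2 then 3 else if P = 3 then 4 else 0)
  else 0

lemma card_supp_pair {x y : ℕ} (hxy : x ≠ y) {a b : ℕ} (ha : a ≠ 0) (hb : b ≠ 0) :
    (Finsupp.single x a + Finsupp.single y b : M).support.card = 2 := by
  classical
  have d1 : Disjoint (Finsupp.single x a : M).support (Finsupp.single y b : M).support := by
    rw [Finsupp.support_single_ne_zero _ ha, Finsupp.support_single_ne_zero _ hb]
    simp [hxy, Ne.symm hxy]
  rw [Finsupp.support_add_eq d1, Finset.card_union_of_disjoint d1,
    Finsupp.support_single_ne_zero _ ha, Finsupp.support_single_ne_zero _ hb]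
  simp

lemma card_supp_triple {x y z : ℕ} (hxy : x ≠ y) (hxz : x ≠ z) (hyz : y ≠ z)
    {a b c : ℕ} (ha : a ≠ 0) (hb : b ≠ 0) (hc : c ≠ 0) :
    (Finsupp.single x a + Finsupp.single y b + Finsupp.single z c : M).support.card = 3 := by
  classical
  have d1 : Disjoint (Finsupp.single x a : M).support (Finsupp.single y b : M).support := by
    rw [Finsupp.support_single_ne_zero _ ha, Finsupp.support_single_ne_zero _ hb]
    simp [hxy, Ne.symm hxy]
  have d2 : Disjoint (Finsupp.single x a + Finsupp.single y b : M).support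
      (Finsupp.single z c : M).support := by
    rw [Finsupp.support_add_eq d1, Finsupp.support_single_ne_zero _ ha,
      Finsupp.support_single_ne_zero _ hb, Finsupp.support_single_ne_zero _ hc]
    simp [hxz, hyz, Ne.symm hxz, Ne.symm hyz]
  rw [Finsupp.support_add_eq d2, Finset.card_union_of_disjoint d2,
    Finsupp.support_add_eq d1, Finset.card_union_of_disjoint d1,
    Finsupp.support_single_ne_zero _ ha, Finsupp.support_single_ne_zero _ hb,
    Finsupp.support_single_ne_zero _ hc]
  simp

lemma pred_count {j : ℕ} {t : M} (ht : t ∈ StateF (j + 1)) (P : ℕ) :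
    ((StateF (j + 2)).filter (fun s => s.support.card = P ∧ Step s t)).card
      = NP P t.support.card := by
  rw [mem_StateF] at ht
  obtain ⟨hts, htb⟩ := ht
  rcases state_shape t hts with ⟨x, rfl⟩ | ⟨x, y, hxy, rfl⟩ | ⟨x, y, z, hxy, hxz, hyz, rfl⟩
  · have hx : x < j + 1 := by
      by_contra h
      have := htb x (by omega)
      simp [Finsupp.single_apply] at this
    rw [cnt1 hx P, Finsupp.support_single_ne_zero _ (by omega : (3:ℕ) ≠ 0)]
    simp [NP]
  · have hx : x < j + 1 := by
      by_contra h
      have := htb x (by omega)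
      simp [Finsupp.add_apply, Finsupp.single_apply, Ne.symm hxy] at this
    have hy : y < j + 1 := by
      by_contra h
      have := htb y (by omega)
      simp [Finsupp.add_apply, Finsupp.single_apply, hxy] at this
    rw [cnt2 hx hy hxy P, card_supp_pair hxy (by omega) (by omega)]
    simp [NP]
  · have hx : x < j + 1 := by
      by_contra h
      have := htb x (by omega)
      simp [Finsupp.add_apply, Finsupp.single_apply, Ne.symm hxy, Ne.symm hxz] at this
    have hy : y < j + 1 := by
      by_contra h
      have := htb y (by omega)
      simp [Finsupp.add_apply, Finsupp.single_apply, hxy, Ne.symm hyz] at this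
    have hz : z < j + 1 := by
      by_contra h
      have := htb z (by omega)
      simp [Finsupp.add_apply, Finsupp.single_apply, hxz, hyz] at this
    rw [cnt3 hx hy hz hxy hxz hyz P,
      card_supp_triple hxy hxz hyz (by omega) (by omega) (by omega)]
    simp [NP]

def Phi (c j : ℕ) : ℕ :=
  ∑ t ∈ (StateF (j + 1)).filter (fun t => t.support.card = c), W j t

lemma card_mem_class {N : ℕ} {t : M} (ht : t ∈ StateF N) :
    t.support.card ∈ ({1, 2, 3} : Finset ℕ) := by
  rw [mem_StateF] at ht
  rcases state_shape t ht.1 with ⟨x, rfl⟩ | ⟨x, y, hxy, rfl⟩ | ⟨x, y, z, hxy, hxz, hyz, rfl⟩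
  · rw [Finsupp.support_single_ne_zero _ (by omega : (3:ℕ) ≠ 0)]; simp
  · rw [card_supp_pair hxy (by omega) (by omega)]; simp
  · rw [card_supp_triple hxy hxz hyz (by omega) (by omega) (by omega)]; simp

lemma Phi_succ (P j : ℕ) :
    Phi P (j + 1) = NP P 1 * Phi 1 j + NP P 2 * Phi 2 j + NP P 3 * Phi 3 j := by
  classical
  have h1 : Phi P (j + 1)
      = ∑ s ∈ (StateF (j + 2)).filter (fun s => s.support.card = P),
          ∑ t ∈ StateF (j + 1), if Step s t then W j t else 0 := by
    rw [Phi]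
    apply Finset.sum_congr rfl
    intro s hs
    rw [Finset.mem_filter] at hs
    have hstate : IsState s := (mem_StateF.mp hs.1).1
    rw [W_succ j s hstate, Finset.sum_filter]
  rw [h1, Finset.sum_comm]
  have h2 : ∀ t ∈ StateF (j + 1),
      (∑ s ∈ (StateF (j + 2)).filter (fun s => s.support.card = P),
        if Step s t then W j t else 0) = NP P t.support.card * W j t := by
    intro t ht
    rw [← Finset.sum_filter, Finset.filter_filter, Finset.sum_const, pred_count ht P,
      smul_eq_mul]
  rw [Finset.sum_congr rfl h2]
  rw [← Finset.sum_fiberwise_of_maps_to (fun t ht => card_mem_class ht)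
    (fun t => NP P t.support.card * W j t)]
  have h3 : ∀ q, (∑ t ∈ (StateF (j + 1)).filter (fun t => t.support.card = q),
      NP P t.support.card * W j t) = NP P q * Phi q j := by
    intro q
    rw [Phi, Finset.mul_sum]
    apply Finset.sum_congr rfl
    intro t ht
    rw [Finset.mem_filter] at ht
    rw [ht.2]
  rw [Finset.sum_insert (by simp), Finset.sum_insert (by simp), Finset.sum_singleton,
    h3 1, h3 2, h3 3, add_assoc]

lemma StateF_one : StateF 1 = {G} := by
  classical
  ext t
  rw [mem_StateF, Finset.mem_singleton]
  constructor
  · rintro ⟨⟨hle, hsum⟩, hb⟩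
    have hz : ∀ i, i ∉ ({0} : Finset ℕ) → t i = 0 := by
      intro i hi
      simp only [Finset.mem_singleton] at hi
      exact hb i (by omega)
    have rep := eq_single_add hz
    rw [Finset.sum_singleton] at rep
    have h0 : t 0 = 3 := by
      rw [← Finsupp.sum_single_index (a := (0:ℕ)) (b := t 0) (h := fun _ x => x) rfl, ← rep]
      exact hsum
    rw [rep, h0]
    rfl
  · rintro rfl
    refine ⟨G_isState, fun i hi => ?_⟩
    rw [G, Finsupp.single_apply]
    have : ¬ (0 : ℕ) = i := by omega
    simp [this]

lemma W_zero_G : W 0 G = 1 := by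
  have : Wset 0 G = {fun _ => G} := by
    ext f
    constructor
    · rintro ⟨h0, -, -, -⟩
      funext k
      have : k = 0 := by omega
      rw [this, h0]
    · rintro rfl
      exact ⟨rfl, rfl, fun _ => G_isState, fun k => k.elim0⟩
  rw [W, this, Set.ncard_singleton]

lemma G_card : G.support.card = 1 := by
  rw [G, Finsupp.support_single_ne_zero _ (by omega : (3:ℕ) ≠ 0)]
  simp

lemma Phi_base (c : ℕ) : Phi c 0 = if c = 1 then 1 else 0 := by
  classical
  rw [Phi, StateF_one]
  by_cases hc : c = 1
  · subst hc
    rw [Finset.filter_singleton]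
    simp [G_card, W_zero_G]
  · rw [Finset.filter_singleton]
    have : ¬ (G.support.card = c) := by rw [G_card]; omega
    simp [this, hc]


lemma step_G (t : M) : Step G t := by
  intro i
  rw [G, Finsupp.single_apply]
  simp

lemma W_G_succ (j : ℕ) : W (j + 1) G = Phi 1 j + Phi 2 j + Phi 3 j := by
  classical
  rw [W_succ j G G_isState]
  rw [Finset.filter_true_of_mem (fun t _ => step_G t)]
  rw [← Finset.sum_fiberwise_of_maps_to (fun t ht => card_mem_class ht) (fun t => W j t)]
  rw [Finset.sum_insert (by simp), Finset.sum_insert (by simp), Finset.sum_singleton]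
  simp only [Phi]
  omega

lemma Phi1_succ (j : ℕ) : Phi 1 (j + 1) = 2 * Phi 1 j + Phi 2 j + Phi 3 j := by
  have h := Phi_succ 1 j; norm_num [NP] at h; omega

lemma Phi2_succ (j : ℕ) : Phi 2 (j + 1) = 2 * Phi 1 j + 4 * Phi 2 j + 3 * Phi 3 j := by
  have h := Phi_succ 2 j; norm_num [NP] at h; omega

lemma Phi3_succ (j : ℕ) : Phi 3 (j + 1) = Phi 2 j + 4 * Phi 3 j := by
  have h := Phi_succ 3 j; norm_num [NP] at h; omega

end
end MultiplexAux

/-- In the multiplex state diagram with `b = 3` balls and capacity `m = 3`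
(states: finitely supported sequences with entries in `{0,1,2,3}` summing to
`3`, indexed from `0`; edge `α → β` iff `α (i+1) ≤ β i` for all `i`), the number
`a n` of closed walks of length `n` based at the state `⟨3⟩` satisfies
`a (k+3) = 10·a (k+2) − 27·a (k+1) + 20·a k` for all `k ≥ 1`, with
`a 1 = 1`, `a 2 = 4`, `a 3 = 20`. -/
theorem multiplex_b3_m3_recurrence
    (a : ℕ → ℕ)
    (ha : ∀ n, a n = {f : Fin (n + 1) → (ℕ →₀ ℕ) |
        f 0 = Finsupp.single 0 3 ∧ f (Fin.last n) = Finsupp.single 0 3 ∧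
        (∀ k, (∀ i, f k i ≤ 3) ∧ (f k).sum (fun _ x => x) = 3) ∧
        (∀ k : Fin n, ∀ i, f k.castSucc (i + 1) ≤ f k.succ i)}.ncard) :
    (∀ k ≥ 1, (a (k + 3) : ℤ) = 10 * a (k + 2) - 27 * a (k + 1) + 20 * a k) ∧
      a 1 = 1 ∧ a 2 = 4 ∧ a 3 = 20 := by
  open MultiplexAux in
  have aW : ∀ n, a n = W n G := fun n => by rw [ha n]; rfl
  have aS : ∀ j, a (j + 1) = Phi 1 j + Phi 2 j + Phi 3 j := fun j => by
    rw [aW (j + 1), W_G_succ]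
  have p0 : Phi 1 0 = 1 := by rw [Phi_base]; norm_num
  have q0 : Phi 2 0 = 0 := by rw [Phi_base]; norm_num
  have r0 : Phi 3 0 = 0 := by rw [Phi_base]; norm_num
  refine ⟨?_, ?_, ?_, ?_⟩
  · intro k hk
    obtain ⟨j, rfl⟩ : ∃ j, k = j + 1 := ⟨k - 1, by omega⟩
    have E0 := aS j
    have E1 := aS (j + 1)
    have E2 := aS (j + 2)
    have E3 := aS (j + 3)
    have A1 := Phi1_succ j
    have A2 := Phi2_succ j
    have A3 := Phi3_succ j
    have B1 : Phi 1 (j + 2) = 2 * Phi 1 (j + 1) + Phi 2 (j + 1) + Phi 3 (j + 1) :=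
      Phi1_succ (j + 1)
    have B2 : Phi 2 (j + 2) = 2 * Phi 1 (j + 1) + 4 * Phi 2 (j + 1) + 3 * Phi 3 (j + 1) :=
      Phi2_succ (j + 1)
    have B3 : Phi 3 (j + 2) = Phi 2 (j + 1) + 4 * Phi 3 (j + 1) :=
      Phi3_succ (j + 1)
    have C1 : Phi 1 (j + 3) = 2 * Phi 1 (j + 2) + Phi 2 (j + 2) + Phi 3 (j + 2) :=
      Phi1_succ (j + 2)
    have C2 : Phi 2 (j + 3) = 2 * Phi 1 (j + 2) + 4 * Phi 2 (j + 2) + 3 * Phi 3 (j + 2) :=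
      Phi2_succ (j + 2)
    have C3 : Phi 3 (j + 3) = Phi 2 (j + 2) + 4 * Phi 3 (j + 2) :=
      Phi3_succ (j + 2)
    have e1 : j + 1 + 3 = (j + 3) + 1 := by omega
    have e2 : j + 1 + 2 = (j + 2) + 1 := by omega
    have e3 : j + 1 + 1 = (j + 1) + 1 := by omega
    rw [e1, e2, e3, E3, E2, E1, aS j]
    push_cast
    omega
  · have := aS 0
    rw [p0, q0, r0] at this
    exact this
  · have h2 : a 2 = Phi 1 1 + Phi 2 1 + Phi 3 1 := aS 1
    have A1 : Phi 1 1 = 2 * Phi 1 0 + Phi 2 0 + Phi 3 0 := Phi1_succ 0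
    have A2 : Phi 2 1 = 2 * Phi 1 0 + 4 * Phi 2 0 + 3 * Phi 3 0 := Phi2_succ 0
    have A3 : Phi 3 1 = Phi 2 0 + 4 * Phi 3 0 := Phi3_succ 0
    omega
  · have h3 : a 3 = Phi 1 2 + Phi 2 2 + Phi 3 2 := aS 2
    have A1 : Phi 1 1 = 2 * Phi 1 0 + Phi 2 0 + Phi 3 0 := Phi1_succ 0
    have A2 : Phi 2 1 = 2 * Phi 1 0 + 4 * Phi 2 0 + 3 * Phi 3 0 := Phi2_succ 0
    have A3 : Phi 3 1 = Phi 2 0 + 4 * Phi 3 0 := Phi3_succ 0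
    have B1 : Phi 1 2 = 2 * Phi 1 1 + Phi 2 1 + Phi 3 1 := Phi1_succ 1
    have B2 : Phi 2 2 = 2 * Phi 1 1 + 4 * Phi 2 1 + 3 * Phi 3 1 := Phi2_succ 1
    have B3 : Phi 3 2 = Phi 2 1 + 4 * Phi 3 1 := Phi3_succ 1
    omega
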